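/- Sunflower lemma: Let A be a finite family of distinct sets each of cardinality at most d over a universe U. If |A| > d! · (p − 1)^d, then A contains a sunflower with p petals, i.e., p sets F_1, …, F_p in A and a core Y such that F_i ∩ F_j = Y for all i ≠ j. -/

import Mathlib

open Finset

theorem sunflower_aux {α : Type} [DecidableEq α] (d : ℕ) : ∀ (p : ℕ) (A : Finset (Finset α)),
    (∀ F ∈ A, F.card ≤ d) → Nat.factorial d * (p - 1) ^ d < A.card →
    ∃ S ⊆ A, S.card = p ∧ ∃ Y : Finset α,
      ∀ F ∈ S, ∀ F' ∈ S, F ≠ F' → F ∩ F' = Y := by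
  classical
  induction d with
  | zero =>
    intro p A hd hA
    exfalso
    have hsub : A ⊆ {∅} := by
      intro F hF
      have : F = ∅ := Finset.card_eq_zero.mp (Nat.le_zero.mp (hd F hF))
      simp [this]
    have := Finset.card_le_card hsub
    simp [Nat.factorial] at hA
    simp at this
    omega
  | succ n ih =>
    intro p A hd hA
    rcases Nat.lt_or_ge p 2 with hp | hp
    · interval_cases p
      · exact ⟨∅, by simp, by simp, ∅, by simp⟩
      · have hpos : 0 < A.card := by
          have : Nat.factorial (n+1) * (1 - 1) ^ (n+1) = 0 := by simp
          omega
        obtain ⟨F, hF⟩ := Finset.card_pos.mp hpos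
        refine ⟨{F}, by simpa using hF, by simp, ∅, ?_⟩
        intro F1 h1 F2 h2 hne
        simp at h1 h2
        subst h1; subst h2; exact absurd rfl hne
    · obtain ⟨q, rfl⟩ : ∃ q, p = q + 2 := ⟨p - 2, by omega⟩
      have hq1 : (q + 2 : ℕ) - 1 = q + 1 := by omega
      rw [hq1] at hA
      -- maximal pairwise disjoint subfamily
      have hne : (A.powerset.filter (fun D => ∀ F ∈ D, ∀ G ∈ D, F ≠ G → F ∩ G = ∅)).Nonempty :=
        ⟨∅, by simp⟩
      obtain ⟨D, hDmem, hDmax⟩ := Finset.exists_max_image _ Finset.card hne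
      rw [Finset.mem_filter, Finset.mem_powerset] at hDmem
      obtain ⟨hDA, hDdisj⟩ := hDmem
      by_cases hDp : q + 2 ≤ D.card
      · obtain ⟨S, hSD, hScard⟩ := Finset.exists_subset_card_eq hDp
        exact ⟨S, hSD.trans hDA, hScard, ∅,
          fun F hF F' hF' hne' => hDdisj F (hSD hF) F' (hSD hF') hne'⟩
      · push_neg at hDp
        have hmax : ∀ F ∈ A, F ∉ D → ∃ G ∈ D, F ∩ G ≠ ∅ := by
          intro F hFA hFD
          by_contra h
          push_neg at h
          have hins : insert F D ∈ A.powerset.filter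
              (fun D => ∀ F ∈ D, ∀ G ∈ D, F ≠ G → F ∩ G = ∅) := by
            rw [Finset.mem_filter, Finset.mem_powerset]
            refine ⟨Finset.insert_subset hFA hDA, ?_⟩
            intro F1 h1 F2 h2 hne12
            rw [Finset.mem_insert] at h1 h2
            rcases h1 with h1 | h1 <;> rcases h2 with h2 | h2
            · exact absurd (h1.trans h2.symm) hne12
            · subst h1; exact h _ h2
            · subst h2; rw [Finset.inter_comm]; exact h _ h1
            · exact hDdisj _ h1 _ h2 hne12
          have := hDmax _ hins
          rw [Finset.card_insert_of_notMem hFD] at this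
          omega
        set X : Finset α := (D.erase ∅).biUnion id with hXdef
        have hXmem : ∀ x, x ∈ X ↔ ∃ G ∈ D.erase ∅, x ∈ G := by
          intro x; simp [hXdef]
        have hmeet : ∀ F ∈ A, F ≠ ∅ → ∃ x ∈ X, x ∈ F := by
          intro F hFA hFne
          by_cases hFD : F ∈ D
          · obtain ⟨x, hx⟩ := Finset.nonempty_iff_ne_empty.mpr hFne
            refine ⟨x, (hXmem x).mpr ⟨F, Finset.mem_erase.mpr ⟨hFne, hFD⟩, hx⟩, hx⟩
          · obtain ⟨G, hGD, hFG⟩ := hmax F hFA hFD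
            obtain ⟨x, hx⟩ := Finset.nonempty_iff_ne_empty.mpr hFG
            rw [Finset.mem_inter] at hx
            have hGne : G ≠ ∅ := by
              intro hGe; rw [hGe] at hx; exact absurd hx.2 (Finset.notMem_empty x)
            exact ⟨x, (hXmem x).mpr ⟨G, Finset.mem_erase.mpr ⟨hGne, hGD⟩, hx.2⟩, hx.1⟩
        -- bound on |X|
        have hXcard : X.card ≤ (D.erase ∅).card * (n + 1) := by
          calc X.card ≤ ∑ G ∈ D.erase ∅, (id G).card := Finset.card_biUnion_le
            _ ≤ ∑ _G ∈ D.erase ∅, (n + 1) := by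
                refine Finset.sum_le_sum ?_
                intro G hG
                exact hd G (hDA (Finset.mem_of_mem_erase hG))
            _ = (D.erase ∅).card * (n + 1) := by rw [Finset.sum_const, smul_eq_mul]
        set cnt : ℕ := (A.filter (fun F => F ≠ ∅)).card with hcntdef
        -- key inequality
        have hkey : X.card * (Nat.factorial n * (q + 1) ^ n) < cnt := by
          have hfacpos : 0 < Nat.factorial (n + 1) * (q + 1) ^ n :=
            Nat.mul_pos (Nat.factorial_pos _) (Nat.pow_pos (by omega))
          by_cases hem : ∅ ∈ A
          · have hemD : ∅ ∈ D := by
              by_contra hemD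
              have hins : insert ∅ D ∈ A.powerset.filter
                  (fun D => ∀ F ∈ D, ∀ G ∈ D, F ≠ G → F ∩ G = ∅) := by
                rw [Finset.mem_filter, Finset.mem_powerset]
                refine ⟨Finset.insert_subset hem hDA, ?_⟩
                intro F1 h1 F2 h2 hne12
                rw [Finset.mem_insert] at h1 h2
                rcases h1 with h1 | h1 <;> rcases h2 with h2 | h2
                · exact absurd (h1.trans h2.symm) hne12
                · subst h1; simp
                · subst h2; simp
                · exact hDdisj _ h1 _ h2 hne12
              have := hDmax _ hins
              rw [Finset.card_insert_of_notMem hemD] at this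
              omega
            have hDe : (D.erase ∅).card ≤ q := by
              rw [Finset.card_erase_of_mem hemD]; omega
            have hcnt : A.card - 1 ≤ cnt := by
              have : A \ {∅} ⊆ A.filter (fun F => F ≠ ∅) := by
                intro F hF
                rw [Finset.mem_sdiff, Finset.mem_singleton] at hF
                exact Finset.mem_filter.mpr ⟨hF.1, hF.2⟩
              have h2 := Finset.card_le_card this
              have h3 : (A \ {∅}).card = A.card - 1 := by
                rw [Finset.card_sdiff_of_subset (by simpa using hem)]
                simp
              omega
            have hX2 : X.card ≤ q * (n + 1) :=
              hXcard.trans (Nat.mul_le_mul_right _ hDe)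
            have step1 : X.card * (Nat.factorial n * (q + 1) ^ n)
                ≤ q * (Nat.factorial (n + 1) * (q + 1) ^ n) := by
              calc X.card * (Nat.factorial n * (q + 1) ^ n)
                  ≤ (q * (n + 1)) * (Nat.factorial n * (q + 1) ^ n) :=
                    Nat.mul_le_mul_right _ hX2
                _ = q * (Nat.factorial (n + 1) * (q + 1) ^ n) := by
                    rw [Nat.factorial_succ]; ring
            have step2 : q * (Nat.factorial (n + 1) * (q + 1) ^ n)
                < Nat.factorial (n + 1) * (q + 1) ^ (n + 1) := by
              have : Nat.factorial (n + 1) * (q + 1) ^ (n + 1)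
                  = (q + 1) * (Nat.factorial (n + 1) * (q + 1) ^ n) := by
                rw [pow_succ]; ring
              rw [this]
              exact (Nat.mul_lt_mul_right hfacpos).mpr (by omega)
            omega
          · have hcnt : cnt = A.card := by
              rw [hcntdef]
              congr 1
              apply Finset.filter_true_of_mem
              intro F hF hFe
              exact hem (hFe ▸ hF)
            have hDe : (D.erase ∅).card ≤ q + 1 := by
              have : (D.erase ∅).card ≤ D.card := Finset.card_erase_le
              omega
            have hX2 : X.card ≤ (q + 1) * (n + 1) :=
              hXcard.trans (Nat.mul_le_mul_right _ hDe)
            have step1 : X.card * (Nat.factorial n * (q + 1) ^ n)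
                ≤ Nat.factorial (n + 1) * (q + 1) ^ (n + 1) := by
              calc X.card * (Nat.factorial n * (q + 1) ^ n)
                  ≤ ((q + 1) * (n + 1)) * (Nat.factorial n * (q + 1) ^ n) :=
                    Nat.mul_le_mul_right _ hX2
                _ = Nat.factorial (n + 1) * (q + 1) ^ (n + 1) := by
                    rw [Nat.factorial_succ, pow_succ]; ring
            omega
        -- counting / double counting
        have hsum : cnt ≤ ∑ x ∈ X, (A.filter (fun F => x ∈ F)).card := by
          calc cnt = ∑ _F ∈ A.filter (fun F => F ≠ ∅), 1 := by
                rw [hcntdef, Finset.card_eq_sum_ones]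
            _ ≤ ∑ F ∈ A.filter (fun F => F ≠ ∅), (X ∩ F).card := by
                refine Finset.sum_le_sum ?_
                intro F hF
                rw [Finset.mem_filter] at hF
                obtain ⟨x, hxX, hxF⟩ := hmeet F hF.1 hF.2
                exact Finset.card_pos.mpr ⟨x, Finset.mem_inter.mpr ⟨hxX, hxF⟩⟩
            _ ≤ ∑ F ∈ A, (X ∩ F).card := by
                refine Finset.sum_le_sum_of_subset (Finset.filter_subset _ _)
            _ = ∑ x ∈ X, (A.filter (fun F => x ∈ F)).card := by
                have hXF : ∀ F : Finset α, (X ∩ F).card = ∑ x ∈ X, if x ∈ F then 1 else 0 := by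
                  intro F
                  rw [← Finset.filter_mem_eq_inter, Finset.card_filter]
                simp only [hXF, Finset.card_filter]
                rw [Finset.sum_comm]
        -- pigeonhole
        have hpig : ∃ x ∈ X, Nat.factorial n * (q + 1) ^ n < (A.filter (fun F => x ∈ F)).card := by
          by_contra h
          push_neg at h
          have : ∑ x ∈ X, (A.filter (fun F => x ∈ F)).card
              ≤ ∑ _x ∈ X, Nat.factorial n * (q + 1) ^ n := Finset.sum_le_sum h
          rw [Finset.sum_const, smul_eq_mul] at this
          omega
        obtain ⟨x, hxX, hx⟩ := hpig
        set B : Finset (Finset α) := (A.filter (fun F => x ∈ F)).image (fun F => F.erase x)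
          with hBdef
        have hBcard : B.card = (A.filter (fun F => x ∈ F)).card := by
          rw [hBdef]
          apply Finset.card_image_of_injOn
          intro F hF F' hF' hFF'
          rw [Finset.mem_coe, Finset.mem_filter] at hF hF'
          have hFF'' : F.erase x = F'.erase x := hFF'
          rw [← Finset.insert_erase hF.2, ← Finset.insert_erase hF'.2, hFF'']
        have hBd : ∀ G ∈ B, G.card ≤ n := by
          intro G hG
          rw [hBdef, Finset.mem_image] at hG
          obtain ⟨F, hF, rfl⟩ := hG
          rw [Finset.mem_filter] at hF
          rw [Finset.card_erase_of_mem hF.2]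
          have := hd F hF.1
          omega
        have hBbig : Nat.factorial n * ((q + 2) - 1) ^ n < B.card := by
          rw [hBcard]
          simpa using hx
        obtain ⟨S', hS'B, hS'card, Y', hY'⟩ := ih (q + 2) B hBd hBbig
        have hnx : ∀ G ∈ S', x ∉ G := by
          intro G hG
          have := hS'B hG
          rw [hBdef, Finset.mem_image] at this
          obtain ⟨F, _, rfl⟩ := this
          exact Finset.notMem_erase x F
        refine ⟨S'.image (fun G => insert x G), ?_, ?_, insert x Y', ?_⟩
        · intro F hF
          rw [Finset.mem_image] at hF
          obtain ⟨G, hG, rfl⟩ := hF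
          have := hS'B hG
          rw [hBdef, Finset.mem_image] at this
          obtain ⟨F', hF', rfl⟩ := this
          rw [Finset.mem_filter] at hF'
          rw [Finset.insert_erase hF'.2]
          exact hF'.1
        · rw [Finset.card_image_of_injOn, hS'card]
          intro G hG G' hG' hGG'
          rw [Finset.mem_coe] at hG hG'
          have h1 := hnx G hG
          have h2 := hnx G' hG'
          have hGG'' : insert x G = insert x G' := hGG'
          rw [← Finset.erase_insert h1, ← Finset.erase_insert h2, hGG'']
        · intro F hF F' hF' hne'
          rw [Finset.mem_image] at hF hF'
          obtain ⟨G, hG, rfl⟩ := hF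
          obtain ⟨G', hG', rfl⟩ := hF'
          have hGG' : G ≠ G' := fun h => hne' (by rw [h])
          have : insert x G ∩ insert x G' = insert x (G ∩ G') := by
            ext y
            simp only [Finset.mem_inter, Finset.mem_insert]
            tauto
          rw [this, hY' G hG G' hG' hGG']

theorem sunflower_lemma {α : Type} [DecidableEq α] (d p : ℕ) (A : Finset (Finset α))
    (hd : ∀ F ∈ A, F.card ≤ d)
    (hA : Nat.factorial d * (p - 1) ^ d < A.card) :
    ∃ S ⊆ A, S.card = p ∧ ∃ Y : Finset α,
      ∀ F ∈ S, ∀ F' ∈ S, F ≠ F' → F ∩ F' = Y := by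
  exact sunflower_aux d p A hd hA
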